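/- Let G* be a CPDAG, X, Y distinct non-adjacent vertices with X not an explicit cause of Y, and assume the critical set C of X with respect to Y is contained in some maximal clique M of the induced subgraph over sib(X,G*). Then in the DAG G ∈ [G*] with pa(X,G) = pa(X,G*) ∪ M, every path from X to Y in G is blocked by pa(X,G*) ∪ M (i.e., X ⊥ Y | pa(X,G*) ∪ M in G). -/

import Mathlib

variable {V : Type*}

/-- A partially directed graph, with directed edges `dir` and undirected edges
`undir`; between two vertices there is at most one edge. -/
structure PDGraph (V : Type*) where
  dir : V → V → Prop
  undir : V → V → Prop
  undir_symm : ∀ {a b}, undir a b → undir b a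
  dir_irrefl : ∀ a, ¬ dir a a
  undir_irrefl : ∀ a, ¬ undir a a
  not_double : ∀ a b, dir a b → ¬ dir b a
  not_mixed : ∀ a b, dir a b → ¬ undir a b

namespace PDGraph

variable (G : PDGraph V)

/-- Two vertices are adjacent if joined by some edge. -/
def adj (a b : V) : Prop := G.dir a b ∨ G.dir b a ∨ G.undir a b

/-- Parents of `x`: vertices with a directed edge into `x`. -/
def pa (x : V) : Set V := {a | G.dir a x}

/-- Children of `x`: vertices with a directed edge from `x`. -/
def ch (x : V) : Set V := {b | G.dir x b}

/-- Siblings (undirected neighbours) of `x`. -/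
def sib (x : V) : Set V := {a | G.undir a x}

end PDGraph

/-- A directed-edge relation is a DAG if it has no directed cycle. -/
def IsDAG (E : V → V → Prop) : Prop := ∀ a, ¬ Relation.TransGen E a a

/-- A v-structure `a → b ← c` in a directed graph, with `a` and `c` non-adjacent. -/
def VStruct (E : V → V → Prop) (a b c : V) : Prop :=
  E a b ∧ E c b ∧ a ≠ c ∧ ¬ E a c ∧ ¬ E c a

/-- The DAG `E` belongs to the Markov equivalence class represented by the
partially directed graph `G`: it is obtained by orienting the undirected edges
of `G` acyclically without creating any new v-structure. -/
def InClass (G : PDGraph V) (E : V → V → Prop) : Prop :=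
  IsDAG E ∧
  (∀ a b, G.dir a b → E a b) ∧
  (∀ a b, G.undir a b → E a b ∨ E b a) ∧
  (∀ a b, E a b → G.adj a b) ∧
  (∀ a b c, VStruct E a b c → G.dir a b ∧ G.dir c b)

/-- `G` is a CPDAG: its class is nonempty, and every undirected edge of `G` is
oriented in both ways among the DAGs of the class (so an edge of `G` is
directed iff it is directed the same way in every DAG of the class). -/
def IsCPDAG (G : PDGraph V) : Prop :=
  (∃ E, InClass G E) ∧ ∀ a b, G.undir a b → ∃ E, InClass G E ∧ E a b

/-- A single step of a partially directed path away from the start. -/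
def PDStep (G : PDGraph V) (a b : V) : Prop := G.dir a b ∨ G.undir a b

/-- `p` is a partially directed path from `x` to `y` in `G`: distinct vertices,
no edge on it points back toward `x`. -/
def IsPDPath (G : PDGraph V) (x y : V) (p : List V) : Prop :=
  p.Nodup ∧ p.Chain' (PDStep G) ∧ p.head? = some x ∧ p.getLast? = some y

/-- A path is chordless in `G` if no two nonconsecutive vertices on it are adjacent. -/
def ChordlessIn (G : PDGraph V) (p : List V) : Prop :=
  ∀ (i j : ℕ) (hi : i < p.length) (hj : j < p.length),
    i + 1 < j → ¬ G.adj (p.get ⟨i, hi⟩) (p.get ⟨j, hj⟩)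

/-- The critical set of `x` with respect to `y`: the vertices adjacent to `x`
lying on (i.e. directly following `x` on) some chordless partially directed
path from `x` to `y`. -/
def criticalSet (G : PDGraph V) (x y : V) : Set V :=
  {c | ∃ p, IsPDPath G x y p ∧ ChordlessIn G p ∧ p[1]? = some c}

/-- One step along a path in the skeleton of the directed graph `E`. -/
def SkelStep (E : V → V → Prop) (a b : V) : Prop := E a b ∨ E b a

/-- The middle vertex `b` of a consecutive triple on a path is active given `Z`:
if it is a collider then it has a descendant in `Z`, otherwise it is not in `Z`. -/
def ActiveTriple (E : V → V → Prop) (Z : Set V) (a b c : V) : Prop :=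
  (E a b ∧ E c b → ∃ d ∈ Z, Relation.ReflTransGen E b d) ∧
  (¬ (E a b ∧ E c b) → b ∉ Z)

/-- `x` and `y` are d-connected given `Z` in the DAG `E`: neither endpoint is in
`Z` and there is a path between them on which every intermediate vertex is active. -/
def DConn (E : V → V → Prop) (Z : Set V) (x y : V) : Prop :=
  x ∉ Z ∧ y ∉ Z ∧ ∃ p : List V, p.Nodup ∧ p.Chain' (SkelStep E) ∧
    p.head? = some x ∧ p.getLast? = some y ∧
    ∀ (i : ℕ) (h : i + 2 < p.length),
      ActiveTriple E Z (p.get ⟨i, by omega⟩) (p.get ⟨i + 1, by omega⟩) (p.get ⟨i + 2, h⟩)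

/-- d-separation: `x ⟂ y | Z` in the DAG `E`. -/
def DSep (E : V → V → Prop) (Z : Set V) (x y : V) : Prop := ¬ DConn E Z x y

/-- `x` is an explicit cause of `y`: `G` itself has a directed path from `x` to `y`. -/
def ExplicitCause (G : PDGraph V) (x y : V) : Prop := Relation.TransGen G.dir x y

/-- `x` is a definite cause of `y`: every DAG in the class has a directed path
from `x` to `y`. -/
def DefiniteCause (G : PDGraph V) (x y : V) : Prop :=
  ∀ E, InClass G E → Relation.TransGen E x y

/-- `x` is a definite non-cause of `y`: no DAG in the class has a directed path
from `x` to `y`. -/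
def DefiniteNonCause (G : PDGraph V) (x y : V) : Prop :=
  ∀ E, InClass G E → ¬ Relation.TransGen E x y

/-- `x` is a possible cause of `y`: it is an ancestor of `y` in some but not
all DAGs of the class. -/
def PossibleCause (G : PDGraph V) (x y : V) : Prop :=
  (∃ E, InClass G E ∧ Relation.TransGen E x y) ∧
  (∃ E, InClass G E ∧ ¬ Relation.TransGen E x y)

/-- `x` is an implicit cause of `y`: a definite cause that is not explicit. -/
def ImplicitCause (G : PDGraph V) (x y : V) : Prop :=
  DefiniteCause G x y ∧ ¬ ExplicitCause G x y

/-- `x` and `y` lie in the same chain component of `G`: they are connected by a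
purely undirected path. -/
def SameChainComp (G : PDGraph V) (x y : V) : Prop := Relation.ReflTransGen G.undir x y

/-- A set of vertices pairwise joined by undirected edges. -/
def UClique (G : PDGraph V) (S : Set V) : Prop :=
  ∀ a ∈ S, ∀ b ∈ S, a ≠ b → G.undir a b

/-- `M` is a maximal clique of the induced subgraph of `G` over the siblings of `x`. -/
def MaxCliqueInSib (G : PDGraph V) (x : V) (M : Set V) : Prop :=
  M ⊆ G.sib x ∧ UClique G M ∧
    ∀ M', M' ⊆ G.sib x → UClique G M' → M ⊆ M' → M' = M

/-- `S` induces a complete subgraph of `G`: all its vertices pairwise adjacent. -/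
def CompleteIn (G : PDGraph V) (S : Set V) : Prop :=
  ∀ a ∈ S, ∀ b ∈ S, a ≠ b → G.adj a b


private lemma getCongr {l : List V} {i j : ℕ} (hi : i < l.length) (hj : j < l.length)
    (hij : i = j) : l.get ⟨i, hi⟩ = l.get ⟨j, hj⟩ := by subst hij; rfl

private lemma chain'_transGen {E : V → V → Prop} {l : List V} (h : l.Chain' E) :
    ∀ (j : ℕ) (hj : j < l.length) (i : ℕ) (hij : i < j),
      Relation.TransGen E (l.get ⟨i, lt_trans hij hj⟩) (l.get ⟨j, hj⟩) := by
  intro j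
  induction j with
  | zero => omega
  | succ j ih =>
    intro hj i hij
    have hstep : E (l.get ⟨j, by omega⟩) (l.get ⟨j + 1, hj⟩) :=
      List.isChain_iff_getElem.mp h j (by omega)
    rcases Nat.lt_or_ge i j with h' | h'
    · exact (ih (by omega) i h').tail hstep
    · have hcongr : l.get ⟨i, lt_trans hij hj⟩ = l.get ⟨j, by omega⟩ :=
        getCongr _ _ (by omega)
      rw [hcongr]
      exact Relation.TransGen.single hstep

/-- From a directed reachability `x ⇝ y` in a DAG of the class, we get a
chordless partially directed path from `x` to `y` in `G`, hence an element of
the critical set which is a child of `x` in `E`. We derive `False` from the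
assumption that everything in the critical set is a parent of `x` in `E`. -/
private lemma no_dir_path (G : PDGraph V) (E1 : V → V → Prop) (hE : InClass G E1)
    (x y : V) (hxy : x ≠ y) (hC : criticalSet G x y ⊆ {a | E1 a x})
    (hanc : Relation.TransGen E1 x y) : False := by
  have hdag := hE.1
  -- the set of lengths of directed paths from x to y
  set T : Set ℕ := {n | ∃ l : List V, l.Chain' E1 ∧ l.head? = some x ∧
    l.getLast? = some y ∧ l.length = n} with hT
  have hTne : T.Nonempty := by
    obtain ⟨l0, hl0chain, hl0last⟩ :=
      List.exists_isChain_cons_of_relationReflTransGen hanc.to_reflTransGen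
    refine ⟨(x :: l0).length, x :: l0, hl0chain, rfl, ?_, rfl⟩
    rw [List.getLast?_eq_getLast (l := x :: l0) (by simp), hl0last]
  obtain ⟨q, hqch, hqhd, hqlast, hqlen⟩ := Nat.sInf_mem hTne
  -- basic facts about q
  have hqne : q ≠ [] := by intro h; subst h; simp at hqhd
  have hq0 : ∀ (h : 0 < q.length), q.get ⟨0, h⟩ = x := by
    intro h
    cases q with
    | nil => simp at hqhd
    | cons a l => simpa using hqhd
  have hqlast' : q.get ⟨q.length - 1, by
      have := List.length_pos_of_ne_nil hqne; omega⟩ = y := by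
    rw [List.get_eq_getElem, ← List.getLast_eq_getElem hqne]
    have := List.getLast?_eq_getLast hqne
    rw [this] at hqlast
    exact Option.some.inj hqlast
  have hqlen2 : 2 ≤ q.length := by
    rcases q with _ | ⟨a, _ | ⟨b, t⟩⟩
    · simp at hqhd
    · exact absurd ((hq0 (by simp)).symm.trans hqlast') hxy
    · simp
  have hqedge : ∀ (i : ℕ) (h : i + 1 < q.length),
      E1 (q.get ⟨i, by omega⟩) (q.get ⟨i + 1, h⟩) := by
    intro i h
    exact List.isChain_iff_getElem.mp hqch i (by omega)
  -- q has no duplicates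
  have hnodup : q.Nodup := by
    rw [List.nodup_iff_injective_get]
    intro a b hab
    by_contra hne
    rcases lt_or_gt_of_ne (fun h : a = b => hne h) with h | h
    · have := chain'_transGen hqch b.1 b.2 a.1 h
      rw [show (⟨a.1, _⟩ : Fin q.length) = a from rfl,
          show (⟨b.1, _⟩ : Fin q.length) = b from rfl, hab] at this
      exact hdag _ this
    · have := chain'_transGen hqch a.1 a.2 b.1 h
      rw [show (⟨b.1, _⟩ : Fin q.length) = b from rfl,
          show (⟨a.1, _⟩ : Fin q.length) = a from rfl, hab] at this
      exact hdag _ this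
  -- q is chordless in G
  have hchordless : ChordlessIn G q := by
    intro i j hi hj hij hadj
    have hEor : E1 (q.get ⟨i, hi⟩) (q.get ⟨j, hj⟩) ∨
        E1 (q.get ⟨j, hj⟩) (q.get ⟨i, hi⟩) := by
      rcases hadj with h | h | h
      · exact Or.inl (hE.2.1 _ _ h)
      · exact Or.inr (hE.2.1 _ _ h)
      · exact hE.2.2.1 _ _ h
    rcases hEor with hEf | hEb
    · -- shortcut: a strictly shorter directed path from x to y
      set q' : List V := q.take (i + 1) ++ q.drop j with hq'
      have htake_ne : q.take (i + 1) ≠ [] := by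
        intro hnil
        have := congrArg List.length hnil
        rw [List.length_take] at this
        simp only [List.length_nil] at this
        omega
      have hdrop_ne : q.drop j ≠ [] := by
        intro hnil
        have := congrArg List.length hnil
        rw [List.length_drop] at this
        simp only [List.length_nil] at this
        omega
      have hlast_take : (q.take (i + 1)).getLast? = some (q.get ⟨i, hi⟩) := by
        rw [List.getLast?_eq_getElem?]
        have hlen : (q.take (i + 1)).length = i + 1 := by
          rw [List.length_take]; omega
        rw [hlen]
        simp only [List.getElem?_take, if_pos (by omega : i + 1 - 1 < i + 1)]
        rw [List.getElem?_eq_getElem (by omega : i + 1 - 1 < q.length)]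
        rfl
      have hhead_drop : (q.drop j).head? = some (q.get ⟨j, hj⟩) := by
        rw [List.head?_drop, List.getElem?_eq_getElem hj]
        rfl
      have hch' : q'.Chain' E1 := by
        refine (hqch.take (i + 1)).append (hqch.drop j) ?_
        intro a ha b hb
        rw [hlast_take] at ha
        rw [hhead_drop] at hb
        have ha' : a = q.get ⟨i, hi⟩ := (by simpa using ha : _ = a).symm
        have hb' : b = q.get ⟨j, hj⟩ := (by simpa using hb : _ = b).symm
        rw [ha', hb']
        exact hEf
      have hq'hd : q'.head? = some x := by
        rw [hq', List.head?_append]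
        cases q with
        | nil => simp at hqhd
        | cons a l =>
          have : (List.take (i + 1) (a :: l)).head? = some a := by
            cases i <;> simp
          rw [this]
          simpa using hqhd
      have hq'last : q'.getLast? = some y := by
        rw [hq', List.getLast?_append]
        have : (q.drop j).getLast? = some y := by
          rw [List.getLast?_eq_getElem?, List.length_drop, List.getElem?_drop]
          rw [show j + (q.length - j - 1) = q.length - 1 by omega]
          rw [List.getElem?_eq_getElem (by omega : q.length - 1 < q.length)]
          exact congrArg some hqlast'
        rw [this]
        rfl
      have hq'len : q'.length < q.length := by
        rw [hq', List.length_append, List.length_take, List.length_drop]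
        omega
      have : q'.length ∈ T := ⟨q', hch', hq'hd, hq'last, rfl⟩
      have := Nat.sInf_le this
      omega
    · -- backward chord closes a directed cycle
      exact hdag _ ((chain'_transGen hqch j hj i (by omega)).tail hEb)
  -- q is a partially directed path in G
  have hpd : q.Chain' (PDStep G) := by
    refine hqch.imp (fun a b hab => ?_)
    rcases hE.2.2.2.1 a b hab with h | h | h
    · exact Or.inl h
    · exact absurd ((Relation.TransGen.single hab).tail (hE.2.1 _ _ h)) (hdag a)
    · exact Or.inr h
  -- the second vertex of q is in the critical set, hence a parent of x in E1
  have h1 : (1 : ℕ) < q.length := by omega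
  have hq1crit : q.get ⟨1, h1⟩ ∈ criticalSet G x y := by
    refine ⟨q, ⟨hnodup, hpd, hqhd, hqlast⟩, hchordless, ?_⟩
    rw [List.getElem?_eq_getElem h1]
    rfl
  have hq1pa : E1 (q.get ⟨1, h1⟩) x := hC hq1crit
  have hq1ch : E1 x (q.get ⟨1, h1⟩) := by
    have := hqedge 0 h1
    rwa [hq0 (by omega)] at this
  exact hdag x ((Relation.TransGen.single hq1ch).tail hq1pa)

/-- If `x` and `y` are non-adjacent, `x` is not an explicit cause of `y`, and
the critical set of `x` w.r.t. `y` is contained in a maximal clique `M` of the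
induced subgraph over `sib(x)`, then in the DAG of the class with
`pa(x) = pa(x,G*) ∪ M` we have `x ⟂ y | pa(x,G*) ∪ M`. -/
theorem stmt18 (G : PDGraph V) (hG : IsCPDAG G) (x y : V) (hxy : x ≠ y)
    (hnadj : ¬ G.adj x y) (hnexp : ¬ ExplicitCause G x y)
    (M : Set V) (hM : MaxCliqueInSib G x M) (hC : criticalSet G x y ⊆ M)
    (E : V → V → Prop) (hE : InClass G E) (hpa : {a | E a x} = G.pa x ∪ M) :
    DSep E (G.pa x ∪ M) x y := by
  intro hconn
  obtain ⟨hxZ, hyZ, p, hnd, hch, hhd, hlast, htri⟩ := hconn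
  have hdag := hE.1
  have hmemZ : ∀ a, E a x ↔ a ∈ G.pa x ∪ M := fun a => Set.ext_iff.mp hpa a
  have hpne : p ≠ [] := by intro h; subst h; simp at hhd
  have hp0 : ∀ (h : 0 < p.length), p.get ⟨0, h⟩ = x := by
    intro h
    cases p with
    | nil => simp at hhd
    | cons a l => simpa using hhd
  have hplast : p.get ⟨p.length - 1, by
      have := List.length_pos_of_ne_nil hpne; omega⟩ = y := by
    rw [List.get_eq_getElem, ← List.getLast_eq_getElem hpne]
    have := List.getLast?_eq_getLast hpne
    rw [this] at hlast
    exact Option.some.inj hlast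
  have hplen2 : 2 ≤ p.length := by
    rcases p with _ | ⟨a, _ | ⟨b, t⟩⟩
    · simp at hhd
    · exact absurd ((hp0 (by simp)).symm.trans hplast) hxy
    · simp
  have hedge : ∀ (i : ℕ) (h : i + 1 < p.length),
      SkelStep E (p.get ⟨i, by omega⟩) (p.get ⟨i + 1, h⟩) := by
    intro i h
    exact List.isChain_iff_getElem.mp hch i (by omega)
  -- the path must be directed away from x all along
  have key : ∀ (i : ℕ) (h : i + 1 < p.length),
      E (p.get ⟨i, by omega⟩) (p.get ⟨i + 1, h⟩) ∧
        Relation.TransGen E x (p.get ⟨i + 1, h⟩) := by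
    intro i
    induction i with
    | zero =>
      intro h
      have h0 : (0 : ℕ) < p.length := by omega
      rcases hedge 0 h with hf | hb
      · rw [hp0 h0] at hf ⊢
        exact ⟨hf, Relation.TransGen.single hf⟩
      · -- backward first edge: second vertex would be an inactive non-collider in Z
        exfalso
        rw [hp0 h0] at hb
        have hmem : p.get ⟨1, h⟩ ∈ G.pa x ∪ M := (hmemZ _).mp hb
        rcases Nat.lt_or_ge 2 p.length with hlen | hlen
        · have htr := htri 0 (by omega)
          have hget0 : p.get ⟨0, by omega⟩ = x := hp0 h0
          rw [hget0] at htr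
          refine (htr.2 (fun hcol => ?_)) (by
            convert hmem using 3 <;> omega) 
          exact hdag x ((Relation.TransGen.single hcol.1).tail hb)
        · have h1 : p.get ⟨1, h⟩ = y := by
            have : p.length - 1 = 1 := by omega
            rw [← hplast]
            exact getCongr _ _ (by omega)
          rw [h1] at hmem
          exact hyZ hmem
    | succ i ih =>
      intro h
      obtain ⟨hEi, htrans⟩ := ih (by omega)
      rcases hedge (i + 1) h with hf | hb
      · exact ⟨hf, htrans.tail hf⟩
      · exfalso
        have htr := htri i (by omega)
        have hcol : E (p.get ⟨i, by omega⟩) (p.get ⟨i + 1, by omega⟩) ∧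
            E (p.get ⟨i + 2, by omega⟩) (p.get ⟨i + 1, by omega⟩) := ⟨hEi, hb⟩
        obtain ⟨d, hdZ, hdesc⟩ := htr.1 hcol
        have hdx : E d x := (hmemZ d).mpr hdZ
        have : Relation.TransGen E (p.get ⟨i + 1, by omega⟩) x :=
          Relation.TransGen.tail' hdesc hdx
        exact hdag x (htrans.trans this)
  -- hence x is an ancestor of y in E; contradiction via the critical set
  have hanc : Relation.TransGen E x y := by
    have := (key (p.length - 2) (by omega)).2
    rwa [getCongr (l := p) (by omega) (by omega)
      (show p.length - 2 + 1 = p.length - 1 by omega), hplast] at this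
  exact no_dir_path G E hE x y hxy
    (fun c hc => by
      have : c ∈ G.pa x ∪ M := Or.inr (hC hc)
      exact (hmemZ c).mpr this) hanc
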